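/- Suppose v̂ : [0,T] × (0,∞) → ℝ is continuously differentiable in t and twice continuously differentiable in Y, and satisfies the reduced HJB equation: for all (t,Y) ∈ [0,T] × (0,∞), ∂_t v̂(t,Y) + sup_{a ∈ ℝ, γ ≥ 0} [ −λ(t)·v̂(t,Y) − e^{−b·t}·u(γ)·v̂(t,Y) − λ(t) + ((a·μ + (1−a)·r)·Y − γ·(1−F(t))^C)·∂_Y v̂(t,Y) + (1/2)·σ²·a²·Y²·∂²_{YY} v̂(t,Y) ] = 0, the supremum being finite. Then the function v(t,U,Y) := (1 − F(t))·e^{−U}·v̂(t,Y) satisfies the full HJB equation with w(U) = −e^{−U}: for all (t,U,Y) ∈ [0,T] × ℝ × (0,∞), ∂_t v + sup_{a ∈ ℝ, γ ≥ 0} [ e^{−b·t}·u(γ)·∂_U v + ((a·μ + (1−a)·r)·Y − γ·(1−F(t))^C)·∂_Y v + (1/2)·σ²·a²·Y²·∂²_{YY} v − p(t)·e^{−U} ] = 0. -/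

import Mathlib

noncomputable section

/-- The set over which the supremum is taken in the reduced HJB equation for
exponential Kihlstrom–Mirman preferences `w(x) = −exp(−x)`. -/
def reducedHJBSet (μ r b σ : ℝ) (C : ℕ) (u F p : ℝ → ℝ)
    (vhat vhat_Y vhat_YY : ℝ → ℝ → ℝ) (t Y : ℝ) : Set ℝ :=
  {z : ℝ | ∃ a γ : ℝ, 0 ≤ γ ∧ z =
    -(p t / (1 - F t)) * vhat t Y - Real.exp (-(b * t)) * u γ * vhat t Y
      - p t / (1 - F t)
      + ((a * μ + (1 - a) * r) * Y - γ * (1 - F t) ^ C) * vhat_Y t Y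
      + 1 / 2 * σ ^ 2 * a ^ 2 * Y ^ 2 * vhat_YY t Y}

/-- The set over which the supremum is taken in the full HJB equation with
`w(U) = −e^{−U}`. -/
def fullHJBSet (μ r b σ : ℝ) (C : ℕ) (u F p : ℝ → ℝ)
    (v_U v_Y v_YY : ℝ → ℝ → ℝ → ℝ) (t U Y : ℝ) : Set ℝ :=
  {z : ℝ | ∃ a γ : ℝ, 0 ≤ γ ∧ z =
    Real.exp (-(b * t)) * u γ * v_U t U Y
      + ((a * μ + (1 - a) * r) * Y - γ * (1 - F t) ^ C) * v_Y t U Y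
      + 1 / 2 * σ ^ 2 * a ^ 2 * Y ^ 2 * v_YY t U Y
      - p t * Real.exp (-U)}

lemma affine_isLUB (c d : ℝ) (hc : 0 < c) (s : Set ℝ) (hne : s.Nonempty)
    (hb : BddAbove s) : IsLUB ((fun z => c * z + d) '' s) (c * sSup s + d) := by
  constructor
  · rintro w ⟨x, hx, rfl⟩
    have := le_csSup hb hx
    dsimp only
    nlinarith
  · rintro w hw
    have h1 : sSup s ≤ (w - d) / c := by
      apply csSup_le hne
      intro x hx
      have := hw ⟨x, hx, rfl⟩
      dsimp only at this
      rw [le_div_iff₀ hc]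
      linarith
    rw [le_div_iff₀ hc] at h1
    nlinarith

/-- Dimension reduction for the HJB equation with exponential Kihlstrom–Mirman
preferences: if `v̂` solves the reduced HJB equation on `[0,T] × (0,∞)` (with finite
supremum), then `v(t,U,Y) = (1 − F(t))·e^{−U}·v̂(t,Y)` solves the full HJB equation. -/
theorem stmt_13 (μ r b σ T : ℝ) (hσ : 0 < σ) (hT : 0 < T)
    (C : ℕ) (hC : C = 0 ∨ C = 1)
    (u : ℝ → ℝ)
    (F p : ℝ → ℝ) (hF : ∀ t ∈ Set.Icc 0 T, HasDerivAt F (p t) t)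
    (hF1 : ∀ t ∈ Set.Icc 0 T, F t < 1)
    (vhat vhat_t vhat_Y vhat_YY : ℝ → ℝ → ℝ)
    (hvt : ∀ t Y, HasDerivAt (fun s => vhat s Y) (vhat_t t Y) t)
    (hvY : ∀ t Y, HasDerivAt (fun Z => vhat t Z) (vhat_Y t Y) Y)
    (hvYY : ∀ t Y, HasDerivAt (fun Z => vhat_Y t Z) (vhat_YY t Y) Y)
    (hct : Continuous fun q : ℝ × ℝ => vhat_t q.1 q.2)
    (hcY : Continuous fun q : ℝ × ℝ => vhat_Y q.1 q.2)
    (hcYY : Continuous fun q : ℝ × ℝ => vhat_YY q.1 q.2)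
    (hbdd : ∀ t ∈ Set.Icc 0 T, ∀ Y ∈ Set.Ioi (0:ℝ),
      BddAbove (reducedHJBSet μ r b σ C u F p vhat vhat_Y vhat_YY t Y))
    (hHJB : ∀ t ∈ Set.Icc 0 T, ∀ Y ∈ Set.Ioi (0:ℝ),
      vhat_t t Y + sSup (reducedHJBSet μ r b σ C u F p vhat vhat_Y vhat_YY t Y) = 0) :
    ∃ v_t v_U v_Y v_YY : ℝ → ℝ → ℝ → ℝ,
      (∀ t U Y, t ∈ Set.Icc 0 T → Y ∈ Set.Ioi (0:ℝ) →
        HasDerivAt (fun s => (1 - F s) * Real.exp (-U) * vhat s Y) (v_t t U Y) t) ∧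
      (∀ t U Y, t ∈ Set.Icc 0 T → Y ∈ Set.Ioi (0:ℝ) →
        HasDerivAt (fun V => (1 - F t) * Real.exp (-V) * vhat t Y) (v_U t U Y) U) ∧
      (∀ t U Y, t ∈ Set.Icc 0 T →
        HasDerivAt (fun Z => (1 - F t) * Real.exp (-U) * vhat t Z) (v_Y t U Y) Y) ∧
      (∀ t U Y, t ∈ Set.Icc 0 T → HasDerivAt (fun Z => v_Y t U Z) (v_YY t U Y) Y) ∧
      ∀ t ∈ Set.Icc 0 T, ∀ U : ℝ, ∀ Y ∈ Set.Ioi (0:ℝ),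
        BddAbove (fullHJBSet μ r b σ C u F p v_U v_Y v_YY t U Y) ∧
        v_t t U Y + sSup (fullHJBSet μ r b σ C u F p v_U v_Y v_YY t U Y) = 0 := by
  refine ⟨fun t U Y => (-(p t) * Real.exp (-U)) * vhat t Y
      + ((1 - F t) * Real.exp (-U)) * vhat_t t Y,
    fun t U Y => -((1 - F t) * Real.exp (-U) * vhat t Y),
    fun t U Y => (1 - F t) * Real.exp (-U) * vhat_Y t Y,
    fun t U Y => (1 - F t) * Real.exp (-U) * vhat_YY t Y,
    ?_, ?_, ?_, ?_, ?_⟩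
  · intro t U Y ht _
    have h1 : HasDerivAt (fun s => (1 - F s) * Real.exp (-U))
        (-(p t) * Real.exp (-U)) t := by
      simpa using ((hF t ht).const_sub 1).mul_const (Real.exp (-U))
    exact h1.mul (hvt t Y)
  · intro t U Y _ _
    have h1 : HasDerivAt (fun V : ℝ => Real.exp (-V)) (-Real.exp (-U)) U := by
      simpa using (hasDerivAt_neg U).exp
    have h2 := (h1.const_mul (1 - F t)).mul_const (vhat t Y)
    refine h2.congr_deriv ?_
    ring
  · intro t U Y _
    exact (hvY t Y).const_mul ((1 - F t) * Real.exp (-U))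
  · intro t U Y _
    exact (hvYY t Y).const_mul ((1 - F t) * Real.exp (-U))
  · intro t ht U Y hY
    have hFt : 0 < 1 - F t := by linarith [hF1 t ht]
    have hFne : (1 : ℝ) - F t ≠ 0 := ne_of_gt hFt
    set c : ℝ := (1 - F t) * Real.exp (-U) with hc
    have hcpos : 0 < c := mul_pos hFt (Real.exp_pos _)
    set d : ℝ := p t * Real.exp (-U) * vhat t Y with hd
    have hset : fullHJBSet μ r b σ C u F p
        (fun t U Y => -((1 - F t) * Real.exp (-U) * vhat t Y))
        (fun t U Y => (1 - F t) * Real.exp (-U) * vhat_Y t Y)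
        (fun t U Y => (1 - F t) * Real.exp (-U) * vhat_YY t Y) t U Y
        = (fun z => c * z + d) '' reducedHJBSet μ r b σ C u F p vhat vhat_Y vhat_YY t Y := by
      ext z
      simp only [fullHJBSet, reducedHJBSet, Set.mem_image, Set.mem_setOf_eq]
      constructor
      · rintro ⟨a, γ, hγ, rfl⟩
        refine ⟨_, ⟨a, γ, hγ, rfl⟩, ?_⟩
        rw [hc, hd]
        field_simp
        ring
      · rintro ⟨x, ⟨a, γ, hγ, rfl⟩, rfl⟩
        refine ⟨a, γ, hγ, ?_⟩
        rw [hc, hd]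
        field_simp
        ring
    have hne : (reducedHJBSet μ r b σ C u F p vhat vhat_Y vhat_YY t Y).Nonempty :=
      ⟨_, 0, 0, le_refl 0, rfl⟩
    have hlub := affine_isLUB c d hcpos _ hne (hbdd t ht Y hY)
    have hne' : ((fun z => c * z + d) ''
        reducedHJBSet μ r b σ C u F p vhat vhat_Y vhat_YY t Y).Nonempty := hne.image _
    have hsup : sSup ((fun z => c * z + d) ''
        reducedHJBSet μ r b σ C u F p vhat vhat_Y vhat_YY t Y)
        = c * sSup (reducedHJBSet μ r b σ C u F p vhat vhat_Y vhat_YY t Y) + d :=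
      hlub.csSup_eq hne'
    have hred : sSup (reducedHJBSet μ r b σ C u F p vhat vhat_Y vhat_YY t Y)
        = -(vhat_t t Y) := by linarith [hHJB t ht Y hY]
    refine ⟨?_, ?_⟩
    · rw [hset]; exact ⟨_, hlub.1⟩
    · rw [hset, hsup, hred, hc, hd]
      ring

end
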